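/- Correctness of the double chain algorithm: let π be a template with n parameters and suppose m ≥ 0 satisfies V_{m+1} = V_m and J_{m+1} = J_m. Then π[V_m] = Z_Φ ∩ π[ℝ^n]. -/

import Mathlib

open MvPolynomial

/-- The Lie derivative of a polynomial along the polynomial vector field `F`. -/
noncomputable def lieDeriv {N : ℕ} (F : Fin N → MvPolynomial (Fin N) ℝ)
    (p : MvPolynomial (Fin N) ℝ) : MvPolynomial (Fin N) ℝ :=
  ∑ i, pderiv i p * F i

/-- `Z_Φ`: the set of polynomials whose induced behaviour vanishes identically on `D`. -/
def Zset {N : ℕ} (x : ℝ → Fin N → ℝ) (D : Set ℝ) : Set (MvPolynomial (Fin N) ℝ) :=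
  {p | ∀ t ∈ D, eval (x t) p = 0}

/-- The vector space `V_i` of parameters `v` such that all Lie derivatives of `π[v]`
up to order `i` vanish at `v₀`. -/
def Vset {N n : ℕ} (F : Fin N → MvPolynomial (Fin N) ℝ) (v₀ : Fin N → ℝ)
    (π : (Fin n → ℝ) →ₗ[ℝ] MvPolynomial (Fin N) ℝ) (i : ℕ) : Set (Fin n → ℝ) :=
  {v | ∀ j ≤ i, eval v₀ ((lieDeriv F)^[j] (π v)) = 0}

/-- The ideal `J_i` generated by `⋃_{j=0}^{i} 𝓛⁽ʲ⁾(π[V_i])`. -/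
noncomputable def Jideal {N n : ℕ} (F : Fin N → MvPolynomial (Fin N) ℝ)
    (v₀ : Fin N → ℝ) (π : (Fin n → ℝ) →ₗ[ℝ] MvPolynomial (Fin N) ℝ) (i : ℕ) :
    Ideal (MvPolynomial (Fin N) ℝ) :=
  Ideal.span {q | ∃ j ≤ i, ∃ v ∈ Vset F v₀ π i, q = (lieDeriv F)^[j] (π v)}

section Helpers

variable {N : ℕ} {F : Fin N → MvPolynomial (Fin N) ℝ} {D : Set ℝ} {x : ℝ → Fin N → ℝ}
  {v₀ : Fin N → ℝ}

lemma lieDeriv_add (p q : MvPolynomial (Fin N) ℝ) :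
    lieDeriv F (p + q) = lieDeriv F p + lieDeriv F q := by
  simp [lieDeriv, add_mul, Finset.sum_add_distrib]

lemma lieDeriv_mul (p q : MvPolynomial (Fin N) ℝ) :
    lieDeriv F (p * q) = p * lieDeriv F q + q * lieDeriv F p := by
  unfold lieDeriv
  rw [Finset.mul_sum, Finset.mul_sum, ← Finset.sum_add_distrib]
  refine Finset.sum_congr rfl fun i _ => ?_
  rw [pderiv_mul]; ring

lemma lieDeriv_X (i : Fin N) : lieDeriv F (X i) = F i := by
  unfold lieDeriv
  rw [Finset.sum_eq_single i] <;> simp +contextual [pderiv_X_of_ne]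

lemma analytic_eval (han : ∀ i, AnalyticOnNhd ℝ (fun t => x t i) D)
    (p : MvPolynomial (Fin N) ℝ) : AnalyticOnNhd ℝ (fun t => eval (x t) p) D := by
  induction p using MvPolynomial.induction_on with
  | C a => simpa using analyticOnNhd_const (v := a)
  | add p q hp hq => simp only [eval_add]; exact hp.add hq
  | mul_X p i hp => simpa [eval_mul] using hp.mul (han i)

lemma hasDerivAt_eval (hsol : ∀ t ∈ D, HasDerivAt x (fun i => eval (x t) (F i)) t)
    (p : MvPolynomial (Fin N) ℝ) {t : ℝ} (ht : t ∈ D) :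
    HasDerivAt (fun s => eval (x s) p) (eval (x t) (lieDeriv F p)) t := by
  induction p using MvPolynomial.induction_on with
  | C a =>
    simpa [lieDeriv] using hasDerivAt_const t a
  | add p q hp hq =>
    have := hp.add hq
    rw [lieDeriv_add]; simp only [eval_add]; exact this
  | mul_X p i hp =>
    have hxi : HasDerivAt (fun s => x s i) (eval (x t) (F i)) t :=
      hasDerivAt_pi.1 (hsol t ht) i
    have : HasDerivAt (fun s => eval (x s) p * x s i)
        (eval (x t) (lieDeriv F p) * x t i + eval (x t) p * eval (x t) (F i)) t := hp.mul hxi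
    rw [lieDeriv_mul, lieDeriv_X]
    simp only [eval_mul, eval_add, eval_X]
    convert this using 1
    ring

lemma eventually_zero_of_iteratedDeriv {g : ℝ → ℝ} {t₀ : ℝ} (hg : AnalyticAt ℝ g t₀)
    (h : ∀ k, iteratedDeriv k g t₀ = 0) : ∀ᶠ t in nhds t₀, g t = 0 := by
  obtain ⟨p, hp⟩ := hg
  have hp0 : p = 0 := by
    funext n; apply ContinuousMultilinearMap.ext; intro y
    obtain ⟨r, hr⟩ := hp
    have h1 : n.factorial • p n (fun _ => (1 : ℝ)) = iteratedFDeriv ℝ n g t₀ (fun _ => 1) :=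
      hr.factorial_smul 1 n
    have h2 : iteratedFDeriv ℝ n g t₀ (fun _ => (1 : ℝ)) = iteratedDeriv n g t₀ :=
      (iteratedDeriv_eq_iteratedFDeriv (f := g)).symm
    have h3 : p n (fun _ => (1 : ℝ)) = 0 := by
      have := h1.trans (h2.trans (h n))
      have hne : ((n.factorial : ℝ)) ≠ 0 := by exact_mod_cast Nat.factorial_ne_zero n
      rwa [nsmul_eq_mul, mul_eq_zero, or_iff_right (by exact_mod_cast hne)] at this
    have h4 : p n y = (∏ i, y i) • p n (fun _ => (1 : ℝ)) := by
      rw [← ContinuousMultilinearMap.map_smul_univ]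
      congr 1; funext i; simp
    simp [h4, h3]
  rw [hp0] at hp
  exact hp.eventually_eq_zero

/-- If all iterated Lie derivatives of `p` vanish at `v₀`, then `p` vanishes on the
trajectory. -/
lemma eval_eq_zero_of_derivs (hD : IsOpen D) (hpre : IsPreconnected D) (h0 : (0:ℝ) ∈ D)
    (hsol : ∀ t ∈ D, HasDerivAt x (fun i => eval (x t) (F i)) t)
    (hx0 : x 0 = v₀) (han : ∀ i, AnalyticOnNhd ℝ (fun t => x t i) D)
    (p : MvPolynomial (Fin N) ℝ) (hp : ∀ k, eval v₀ ((lieDeriv F)^[k] p) = 0) :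
    ∀ t ∈ D, eval (x t) p = 0 := by
  set g : ℕ → ℝ → ℝ := fun k t => eval (x t) ((lieDeriv F)^[k] p) with hg
  have hder : ∀ k, ∀ t ∈ D, HasDerivAt (g k) (g (k + 1) t) t := by
    intro k t ht
    simpa [hg, Function.iterate_succ_apply'] using
      hasDerivAt_eval hsol ((lieDeriv F)^[k] p) ht
  have hit : ∀ k, ∀ t ∈ D, iteratedDeriv k (g 0) t = g k t := by
    intro k
    induction k with
    | zero => intro t ht; simp [iteratedDeriv_zero]
    | succ k ih =>
      intro t ht
      rw [iteratedDeriv_succ]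
      have heq : deriv (iteratedDeriv k (g 0)) t = deriv (g k) t := by
        apply Filter.EventuallyEq.deriv_eq
        exact Filter.eventuallyEq_of_mem (hD.mem_nhds ht) fun s hs => ih s hs
      rw [heq, (hder k t ht).deriv]
  have hana : AnalyticOnNhd ℝ (g 0) D := by
    simpa [hg] using analytic_eval han p
  have hev : ∀ᶠ t in nhds 0, g 0 t = 0 := by
    apply eventually_zero_of_iteratedDeriv (hana 0 h0)
    intro k
    rw [hit k 0 h0]
    simp [hg, hx0, hp k]
  have := hana.eqOn_zero_of_preconnected_of_eventuallyEq_zero hpre h0 hev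
  intro t ht
  simpa [hg] using this ht

/-- `Zset` is closed under the Lie derivative. -/
lemma lieDeriv_mem_Zset (hD : IsOpen D)
    (hsol : ∀ t ∈ D, HasDerivAt x (fun i => eval (x t) (F i)) t)
    {p : MvPolynomial (Fin N) ℝ} (hp : p ∈ Zset x D) : lieDeriv F p ∈ Zset x D := by
  intro t ht
  have h1 := hasDerivAt_eval hsol p ht
  have h2 : (fun s => eval (x s) p) =ᶠ[nhds t] (fun _ => (0:ℝ)) :=
    Filter.eventuallyEq_of_mem (hD.mem_nhds ht) fun s hs => hp s hs
  have h3 : deriv (fun s => eval (x s) p) t = 0 := by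
    rw [h2.deriv_eq]; simp
  rw [← h1.deriv]; exact h3

end Helpers

/-- correctness of the double chain algorithm: if `V_{m+1} = V_m` and
`J_{m+1} = J_m`, then `π[V_m] = Z_Φ ∩ π[ℝⁿ]`. -/
theorem stmt10
    (N n : ℕ) (hN : 1 ≤ N)
    (F : Fin N → MvPolynomial (Fin N) ℝ) (v₀ : Fin N → ℝ)
    (D : Set ℝ) (hD : IsOpen D) (hDc : D.OrdConnected) (h0 : (0 : ℝ) ∈ D)
    (x : ℝ → Fin N → ℝ)
    (hsol : ∀ t ∈ D, HasDerivAt x (fun i => eval (x t) (F i)) t)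
    (hx0 : x 0 = v₀)
    (han : ∀ i, AnalyticOnNhd ℝ (fun t => x t i) D)
    (π : (Fin n → ℝ) →ₗ[ℝ] MvPolynomial (Fin N) ℝ) (m : ℕ)
    (hV : Vset F v₀ π (m + 1) = Vset F v₀ π m)
    (hJ : Jideal F v₀ π (m + 1) = Jideal F v₀ π m) :
    ⇑π '' Vset F v₀ π m = Zset x D ∩ Set.range ⇑π := by
  -- J_m is closed under the Lie derivative
  have hLJ : ∀ q ∈ Jideal F v₀ π m, lieDeriv F q ∈ Jideal F v₀ π m := by
    intro q hq
    rw [Jideal] at hq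
    induction hq using Submodule.span_induction with
    | mem q hq =>
      obtain ⟨j, hj, v, hv, rfl⟩ := hq
      rw [← hJ]
      apply Ideal.subset_span
      exact ⟨j + 1, by omega, v, by rw [hV]; exact hv,
        (Function.iterate_succ_apply' (lieDeriv F) j (π v)).symm⟩
    | zero => simpa [lieDeriv] using (Jideal F v₀ π m).zero_mem
    | add a b _ _ iha ihb => rw [lieDeriv_add]; exact add_mem iha ihb
    | smul a b hb ihb =>
      rw [smul_eq_mul, lieDeriv_mul]
      exact add_mem (Ideal.mul_mem_left _ a ihb)
        (Ideal.mul_mem_right _ _ (by rw [Jideal] at *; exact hb))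
  -- every element of J_m vanishes at v₀
  have hJ0 : ∀ q ∈ Jideal F v₀ π m, eval v₀ q = 0 := by
    intro q hq
    have hle : Jideal F v₀ π m ≤ RingHom.ker (eval v₀ :
        MvPolynomial (Fin N) ℝ →+* ℝ) := by
      rw [Jideal]
      apply Ideal.span_le.mpr
      rintro q ⟨j, hj, v, hv, rfl⟩
      exact RingHom.mem_ker.mpr (hv j hj)
    exact RingHom.mem_ker.mp (hle hq)
  -- all iterated Lie derivatives of π v, v ∈ V_m, lie in J_m
  have hiter : ∀ v ∈ Vset F v₀ π m, ∀ k, (lieDeriv F)^[k] (π v) ∈ Jideal F v₀ π m := by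
    intro v hv k
    induction k with
    | zero => exact Ideal.subset_span ⟨0, by omega, v, hv, rfl⟩
    | succ k ih =>
      rw [Function.iterate_succ_apply']
      exact hLJ _ ih
  apply Set.Subset.antisymm
  · rintro _ ⟨v, hv, rfl⟩
    refine ⟨?_, v, rfl⟩
    intro t ht
    exact eval_eq_zero_of_derivs hD hDc.isPreconnected h0 hsol hx0 han (π v)
      (fun k => hJ0 _ (hiter v hv k)) t ht
  · rintro q ⟨hqZ, v, rfl⟩
    refine ⟨v, ?_, rfl⟩
    have hall : ∀ k, (lieDeriv F)^[k] (π v) ∈ Zset x D := by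
      intro k
      induction k with
      | zero => exact hqZ
      | succ k ih =>
        rw [Function.iterate_succ_apply']
        exact lieDeriv_mem_Zset hD hsol ih
    intro j _
    have := hall j 0 h0
    rwa [hx0] at this
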